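/- Let a, b ∈ ℝ_{++}ⁿ be strictly positive probability vectors, C ∈ ℝ₊^{n×n}, γ > 0, K := exp(−C/γ). Let (f_k, g_k) be the Greenkhorn iterates initialized at (f₀, g₀) = (γ log a, γ log b), with P_k := diag(e^{f_k/γ}) K diag(e^{g_k/γ}): at each step, with I maximizing i ↦ ρ(a_i, (P_k𝟏ₙ)_i) and J maximizing j ↦ ρ(b_j, (P_kᵀ𝟏ₙ)_j), the single coordinate f_I is updated to γ log a_I − γ log(K e^{g_k/γ})_I if ρ(a_I,(P_k𝟏ₙ)_I) > ρ(b_J,(P_kᵀ𝟏ₙ)_J), and otherwise g_J is updated to γ log b_J − γ log(Kᵀ e^{f_k/γ})_J. Then for every k ≥ 0 and every dual optimal solution (f*, g*): h(f*, g*) − h(f_k, g_k) ≤ 2‖C‖_∞ (‖a − P_k𝟏ₙ‖₁ + ‖b − P_kᵀ𝟏ₙ‖₁). -/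

import Mathlib

/-- The dual entropic OT objective
`h(f,g) = ⟨f,a⟩ + ⟨g,b⟩ − γ Σ_{i,j} exp((f_i + g_j − C_{ij})/γ)`. -/
noncomputable def dualObj {n : ℕ} (a b : Fin n → ℝ) (C : Matrix (Fin n) (Fin n) ℝ)
    (γ : ℝ) (f g : Fin n → ℝ) : ℝ :=
  (∑ i, f i * a i) + (∑ j, g j * b j) -
    γ * ∑ i, ∑ j, Real.exp ((f i + g j - C i j) / γ)

/-- The transport plan `P = diag(e^{f/γ}) K diag(e^{g/γ})` with `K = exp(−C/γ)`. -/
noncomputable def plan {n : ℕ} (C : Matrix (Fin n) (Fin n) ℝ) (γ : ℝ)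
    (f g : Fin n → ℝ) : Matrix (Fin n) (Fin n) ℝ :=
  fun i j => Real.exp (f i / γ) * Real.exp (-C i j / γ) * Real.exp (g j / γ)

/-- The scalar Bregman divergence `ρ(x,y) = y − x + x log(x/y)`. -/
noncomputable def rho (x y : ℝ) : ℝ := y - x + x * Real.log (x / y)

/-- `(f k, g k)` is the sequence of Greenkhorn iterates (in dual form),
initialized at `(γ log a, γ log b)`.  At step `k`, with `P_k` the current plan,
`I` a maximizer of `i ↦ ρ(a_i, (P_k𝟏)_i)` and `J` a maximizer of
`j ↦ ρ(b_j, (P_kᵀ𝟏)_j)`, the coordinate `f_I` is updated to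
`γ log a_I − γ log (K e^{g_k/γ})_I` if `ρ(a_I,(P_k𝟏)_I) > ρ(b_J,(P_kᵀ𝟏)_J)`,
and otherwise `g_J` is updated to `γ log b_J − γ log (Kᵀ e^{f_k/γ})_J`. -/
def GreenkhornSeq {n : ℕ} (a b : Fin n → ℝ) (C : Matrix (Fin n) (Fin n) ℝ) (γ : ℝ)
    (f g : ℕ → Fin n → ℝ) : Prop :=
  f 0 = (fun i => γ * Real.log (a i)) ∧
  g 0 = (fun j => γ * Real.log (b j)) ∧
  ∀ k : ℕ, ∃ I J : Fin n,
    (∀ i, rho (a i) (∑ j, plan C γ (f k) (g k) i j) ≤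
      rho (a I) (∑ j, plan C γ (f k) (g k) I j)) ∧
    (∀ j, rho (b j) (∑ i, plan C γ (f k) (g k) i j) ≤
      rho (b J) (∑ i, plan C γ (f k) (g k) i J)) ∧
    (rho (b J) (∑ i, plan C γ (f k) (g k) i J) <
        rho (a I) (∑ j, plan C γ (f k) (g k) I j) →
      f (k+1) = Function.update (f k) I (γ * Real.log (a I) -
          γ * Real.log (∑ j, Real.exp (-C I j / γ) * Real.exp (g k j / γ))) ∧
      g (k+1) = g k) ∧
    (¬ (rho (b J) (∑ i, plan C γ (f k) (g k) i J) <
        rho (a I) (∑ j, plan C γ (f k) (g k) I j)) →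
      f (k+1) = f k ∧
      g (k+1) = Function.update (g k) J (γ * Real.log (b J) -
          γ * Real.log (∑ i, Real.exp (-C i J / γ) * Real.exp (f k i / γ))))

/-- If `0 < S₁ ≤ e^{M/γ} S₂` then `γ log S₁ ≤ M + γ log S₂`. -/
private lemma gamma_log_le {γ M S₁ S₂ : ℝ} (hγ : 0 < γ) (h₁ : 0 < S₁)
    (h : S₁ ≤ Real.exp (M / γ) * S₂) :
    γ * Real.log S₁ ≤ M + γ * Real.log S₂ := by
  have h₂ : 0 < S₂ := by
    by_contra h'
    push_neg at h'
    nlinarith [Real.exp_pos (M / γ)]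
  have hlog : Real.log S₁ ≤ Real.log (Real.exp (M / γ) * S₂) :=
    (Real.log_le_log_iff h₁ (mul_pos (Real.exp_pos _) h₂)).2 h
  rw [Real.log_mul (Real.exp_ne_zero _) h₂.ne', Real.log_exp] at hlog
  have := mul_le_mul_of_nonneg_left hlog hγ.le
  calc γ * Real.log S₁ ≤ γ * (M / γ + Real.log S₂) := this
    _ = M + γ * Real.log S₂ := by field_simp

/-- Termwise comparison of weighted exponential sums. -/
private lemma sum_exp_le_aux {n : ℕ} {γ : ℝ} (hγ : 0 < γ) (w x y : Fin n → ℝ) (M : ℝ)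
    (hw : ∀ j, 0 ≤ w j) (hxy : ∀ j, x j ≤ M + y j) :
    ∑ j, w j * Real.exp (x j / γ) ≤ Real.exp (M / γ) * ∑ j, w j * Real.exp (y j / γ) := by
  rw [Finset.mul_sum]
  refine Finset.sum_le_sum fun j _ => ?_
  have hexp : Real.exp (x j / γ) ≤ Real.exp (M / γ) * Real.exp (y j / γ) := by
    rw [← Real.exp_add, ← add_div]
    exact Real.exp_le_exp.2 ((div_le_div_iff_of_pos_right hγ).2 (hxy j))
  calc w j * Real.exp (x j / γ) ≤ w j * (Real.exp (M / γ) * Real.exp (y j / γ)) :=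
        mul_le_mul_of_nonneg_left hexp (hw j)
    _ = Real.exp (M / γ) * (w j * Real.exp (y j / γ)) := by ring

/-- From `e^{x/γ} S = c₀` deduce `x = γ log c₀ − γ log S`. -/
private lemma eq_gamma_log {γ x S c₀ : ℝ} (hγ : 0 < γ) (hS : 0 < S)
    (h : Real.exp (x / γ) * S = c₀) :
    x = γ * Real.log c₀ - γ * Real.log S := by
  have hc : Real.log c₀ = x / γ + Real.log S := by
    rw [← h, Real.log_mul (Real.exp_ne_zero _) hS.ne', Real.log_exp]
  rw [hc]
  field_simp
  ring


private lemma exp_div_mono {γ : ℝ} (hγ : 0 < γ) {p q : ℝ} (h : p ≤ q) :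
    Real.exp (p / γ) ≤ Real.exp (q / γ) :=
  Real.exp_le_exp.2 ((div_le_div_iff_of_pos_right hγ).2 h)

private lemma exp_term_le {γ : ℝ} (hγ : 0 < γ) {p q M : ℝ} (h : p ≤ M + q) :
    Real.exp (p / γ) ≤ Real.exp (M / γ) * Real.exp (q / γ) := by
  rw [← Real.exp_add, ← add_div]
  exact exp_div_mono hγ h

/-- **Dual gap bound for Greenkhorn** (Lemma of the paper): for Greenkhorn iterates
initialized at `(γ log a, γ log b)`, for every `k` and every dual optimal solution
`(f*, g*)`, `h(f*,g*) − h(f_k,g_k) ≤ 2‖C‖_∞ (‖a − P_k𝟏‖₁ + ‖b − P_kᵀ𝟏‖₁)`. -/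
theorem greenkhorn_dual_gap_bound {n : ℕ} (a b : Fin n → ℝ)
    (C : Matrix (Fin n) (Fin n) ℝ) (γ : ℝ) (hγ : 0 < γ)
    (ha0 : ∀ i, 0 < a i) (hb0 : ∀ j, 0 < b j)
    (ha1 : ∑ i, a i = 1) (hb1 : ∑ j, b j = 1)
    (hC : ∀ i j, 0 ≤ C i j)
    (f g : ℕ → Fin n → ℝ) (hiter : GreenkhornSeq a b C γ f g) :
    ∀ k : ℕ, ∀ fs gs : Fin n → ℝ,
      (∀ i, ∑ j, plan C γ fs gs i j = a i) →
      (∀ j, ∑ i, plan C γ fs gs i j = b j) →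
      dualObj a b C γ fs gs - dualObj a b C γ (f k) (g k) ≤
        2 * (⨆ i, ⨆ j, |C i j|) *
          ((∑ i, |a i - ∑ j, plan C γ (f k) (g k) i j|) +
            (∑ j, |b j - ∑ i, plan C γ (f k) (g k) i j|)) := by
  intro k fs gs hfs hgs
  rcases Nat.eq_zero_or_pos n with hn | hn
  · subst hn
    simp [dualObj]
  haveI : Nonempty (Fin n) := ⟨⟨0, hn⟩⟩
  set E := ⨆ i, ⨆ j, |C i j| with hE
  -- basic facts about E
  have habsE : ∀ i j, |C i j| ≤ E := by
    intro i j
    have h1 : |C i j| ≤ ⨆ j', |C i j'| :=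
      le_ciSup (f := fun j' => |C i j'|) (Set.Finite.bddAbove (Set.finite_range _)) j
    exact h1.trans
      (le_ciSup (f := fun i' => ⨆ j', |C i' j'|) (Set.Finite.bddAbove (Set.finite_range _)) i)
  have hCE : ∀ i j, C i j ≤ E := fun i j => (le_abs_self _).trans (habsE i j)
  have hE0 : 0 ≤ E := (abs_nonneg _).trans (habsE (Classical.arbitrary _) (Classical.arbitrary _))
  -- positivity helpers
  have hplanpos : ∀ (F G : Fin n → ℝ) i j, 0 < plan C γ F G i j := by
    intro F G i j
    exact mul_pos (mul_pos (Real.exp_pos _) (Real.exp_pos _)) (Real.exp_pos _)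
  -- key quantities
  set V := ∑ j, Real.exp (gs j / γ) with hVdef
  set U := ∑ i, Real.exp (fs i / γ) with hUdef
  have hVpos : 0 < V := Finset.sum_pos (fun j _ => Real.exp_pos _) Finset.univ_nonempty
  have hUpos : 0 < U := Finset.sum_pos (fun i _ => Real.exp_pos _) Finset.univ_nonempty
  obtain ⟨t, ht⟩ : ∃ t : ℝ, t = γ * Real.log V - E := ⟨_, rfl⟩
  -- row and column "kernel sums" for the optimal pair
  set S : Fin n → ℝ := fun i => ∑ j, Real.exp (-C i j / γ) * Real.exp (gs j / γ) with hSdef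
  set T : Fin n → ℝ := fun j => ∑ i, Real.exp (-C i j / γ) * Real.exp (fs i / γ) with hTdef
  have hSpos : ∀ i, 0 < S i := fun i =>
    Finset.sum_pos (fun j _ => mul_pos (Real.exp_pos _) (Real.exp_pos _)) Finset.univ_nonempty
  have hTpos : ∀ j, 0 < T j := fun j =>
    Finset.sum_pos (fun i _ => mul_pos (Real.exp_pos _) (Real.exp_pos _)) Finset.univ_nonempty
  -- marginal identities for the optimal pair
  have hrow : ∀ i, Real.exp (fs i / γ) * S i = a i := by
    intro i
    rw [← hfs i, hSdef, Finset.mul_sum]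
    exact Finset.sum_congr rfl fun j _ => by rw [plan]; ring
  have hcol : ∀ j, Real.exp (gs j / γ) * T j = b j := by
    intro j
    rw [← hgs j, hTdef, Finset.mul_sum]
    exact Finset.sum_congr rfl fun i _ => by rw [plan]; ring
  have hfs_eq : ∀ i, fs i = γ * Real.log (a i) - γ * Real.log (S i) :=
    fun i => eq_gamma_log hγ (hSpos i) (hrow i)
  have hgs_eq : ∀ j, gs j = γ * Real.log (b j) - γ * Real.log (T j) :=
    fun j => eq_gamma_log hγ (hTpos j) (hcol j)
  -- bounds relating S i to V and T j to U
  have hSleV : ∀ i, γ * Real.log (S i) ≤ 0 + γ * Real.log V := by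
    intro i
    refine gamma_log_le hγ (hSpos i) ?_
    have hterm : ∀ j, Real.exp (-C i j / γ) * Real.exp (gs j / γ) ≤
        Real.exp ((0:ℝ) / γ) * Real.exp (gs j / γ) := by
      intro j
      exact mul_le_mul_of_nonneg_right
        (exp_div_mono hγ (by linarith [hC i j])) (Real.exp_pos _).le
    calc S i ≤ ∑ j, Real.exp ((0:ℝ) / γ) * Real.exp (gs j / γ) :=
          Finset.sum_le_sum fun j _ => hterm j
      _ = Real.exp ((0:ℝ) / γ) * V := by rw [Finset.mul_sum]
  have hVleS : ∀ i, γ * Real.log V ≤ E + γ * Real.log (S i) := by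
    intro i
    refine gamma_log_le hγ hVpos ?_
    rw [Finset.mul_sum]
    refine Finset.sum_le_sum fun j _ => ?_
    have e : Real.exp (-C i j / γ) * Real.exp (gs j / γ) = Real.exp ((-C i j + gs j) / γ) := by
      rw [← Real.exp_add, ← add_div]
    rw [e]
    exact exp_term_le hγ (by linarith [hCE i j])
  have hTleU : ∀ j, γ * Real.log (T j) ≤ 0 + γ * Real.log U := by
    intro j
    refine gamma_log_le hγ (hTpos j) ?_
    have hterm : ∀ i, Real.exp (-C i j / γ) * Real.exp (fs i / γ) ≤
        Real.exp ((0:ℝ) / γ) * Real.exp (fs i / γ) := by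
      intro i
      exact mul_le_mul_of_nonneg_right
        (exp_div_mono hγ (by linarith [hC i j])) (Real.exp_pos _).le
    calc T j ≤ ∑ i, Real.exp ((0:ℝ) / γ) * Real.exp (fs i / γ) :=
          Finset.sum_le_sum fun i _ => hterm i
      _ = Real.exp ((0:ℝ) / γ) * U := by rw [Finset.mul_sum]
  have hUleT : ∀ j, γ * Real.log U ≤ E + γ * Real.log (T j) := by
    intro j
    refine gamma_log_le hγ hUpos ?_
    rw [Finset.mul_sum]
    refine Finset.sum_le_sum fun i _ => ?_
    have e : Real.exp (-C i j / γ) * Real.exp (fs i / γ) = Real.exp ((-C i j + fs i) / γ) := by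
      rw [← Real.exp_add, ← add_div]
    rw [e]
    exact exp_term_le hγ (by linarith [hCE i j])
  -- the product U*V is between 1 and e^{E/γ}
  have hUV : U * V = ∑ i, ∑ j, Real.exp (fs i / γ) * Real.exp (gs j / γ) := by
    rw [hUdef, Finset.sum_mul]
    exact Finset.sum_congr rfl fun i _ => by rw [hVdef, Finset.mul_sum]
  have hmass1 : ∑ i, ∑ j, plan C γ fs gs i j = 1 := by
    calc ∑ i, ∑ j, plan C γ fs gs i j = ∑ i, a i := Finset.sum_congr rfl fun i _ => hfs i
      _ = 1 := ha1
  have hUV1 : 1 ≤ U * V := by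
    rw [hUV, ← hmass1]
    refine Finset.sum_le_sum fun i _ => Finset.sum_le_sum fun j _ => ?_
    rw [plan]
    have h1 : Real.exp (-C i j / γ) ≤ 1 :=
      Real.exp_le_one_iff.2 (div_nonpos_of_nonpos_of_nonneg (neg_nonpos.2 (hC i j)) hγ.le)
    calc Real.exp (fs i / γ) * Real.exp (-C i j / γ) * Real.exp (gs j / γ)
        = (Real.exp (fs i / γ) * Real.exp (gs j / γ)) * Real.exp (-C i j / γ) := by ring
      _ ≤ (Real.exp (fs i / γ) * Real.exp (gs j / γ)) * 1 :=
          mul_le_mul_of_nonneg_left h1 (by positivity)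
      _ = Real.exp (fs i / γ) * Real.exp (gs j / γ) := mul_one _
  have hUV2 : U * V ≤ Real.exp (E / γ) * 1 := by
    rw [hUV, ← hmass1, Finset.mul_sum]
    refine Finset.sum_le_sum fun i _ => ?_
    rw [Finset.mul_sum]
    refine Finset.sum_le_sum fun j _ => ?_
    rw [plan]
    have h1 : 1 ≤ Real.exp (E / γ) * Real.exp (-C i j / γ) := by
      rw [← Real.exp_add, ← add_div]
      refine Real.one_le_exp (div_nonneg ?_ hγ.le)
      have := hCE i j
      linarith
    calc Real.exp (fs i / γ) * Real.exp (gs j / γ)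
        = (Real.exp (fs i / γ) * Real.exp (gs j / γ)) * 1 := (mul_one _).symm
      _ ≤ (Real.exp (fs i / γ) * Real.exp (gs j / γ)) * (Real.exp (E / γ) * Real.exp (-C i j / γ)) :=
          mul_le_mul_of_nonneg_left h1 (by positivity)
      _ = Real.exp (E / γ) * (Real.exp (fs i / γ) * Real.exp (-C i j / γ) * Real.exp (gs j / γ)) := by
          ring
  have hD1 : 0 ≤ γ * Real.log U + γ * Real.log V := by
    have h1 : 0 ≤ Real.log (U * V) := Real.log_nonneg hUV1
    rw [Real.log_mul hUpos.ne' hVpos.ne'] at h1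
    nlinarith
  have hD2 : γ * Real.log U + γ * Real.log V ≤ E := by
    have h1 : Real.log (U * V) ≤ E / γ := by
      rw [Real.log_le_iff_le_exp (mul_pos hUpos hVpos)]
      calc U * V ≤ Real.exp (E / γ) * 1 := hUV2
        _ = Real.exp (E / γ) := mul_one _
    rw [Real.log_mul hUpos.ne' hVpos.ne'] at h1
    calc γ * Real.log U + γ * Real.log V = γ * (Real.log U + Real.log V) := by ring
      _ ≤ γ * (E / γ) := mul_le_mul_of_nonneg_left h1 hγ.le
      _ = E := by field_simp
  -- the central induction: iterates stay within 2E of the shifted optimal pair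
  have hQ : ∀ m : ℕ, (∀ i, |fs i + t - f m i| ≤ 2 * E) ∧ (∀ j, |gs j - t - g m j| ≤ 2 * E) := by
    intro m
    induction m with
    | zero =>
      constructor
      · intro i
        have h0 : f 0 i = γ * Real.log (a i) := by rw [hiter.1]
        rw [h0, hfs_eq i, abs_le]
        constructor
        · have := hSleV i
          linarith [ht, hE0]
        · have := hVleS i
          linarith [ht, hE0]
      · intro j
        have h0 : g 0 j = γ * Real.log (b j) := by rw [hiter.2.1]
        rw [h0, hgs_eq j, abs_le]
        constructor
        · have := hTleU j
          linarith [ht, hD2, hE0]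
        · have := hUleT j
          linarith [ht, hD1, hE0]
    | succ m ih =>
      obtain ⟨I, J, _, _, hc1, hc2⟩ := hiter.2.2 m
      by_cases hlt : rho (b J) (∑ i, plan C γ (f m) (g m) i J) <
          rho (a I) (∑ j, plan C γ (f m) (g m) I j)
      · obtain ⟨hfk, hgk⟩ := hc1 hlt
        constructor
        · intro i
          rw [hfk]
          rcases eq_or_ne i I with rfl | hne
          · rw [Function.update_self]
            set Sk := ∑ j, Real.exp (-C i j / γ) * Real.exp (g m j / γ) with hSk
            have hSkpos : 0 < Sk :=
              Finset.sum_pos (fun j _ => mul_pos (Real.exp_pos _) (Real.exp_pos _))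
                Finset.univ_nonempty
            have hup : γ * Real.log Sk ≤ (2 * E - t) + γ * Real.log (S i) := by
              refine gamma_log_le hγ hSkpos ?_
              refine sum_exp_le_aux hγ (fun j => Real.exp (-C i j / γ)) (g m) gs _
                (fun j => (Real.exp_pos _).le) fun j => ?_
              have := (abs_le.1 (ih.2 j)).1
              linarith
            have hlo : γ * Real.log (S i) ≤ (2 * E + t) + γ * Real.log Sk := by
              refine gamma_log_le hγ (hSpos i) ?_
              refine sum_exp_le_aux hγ (fun j => Real.exp (-C i j / γ)) gs (g m) _
                (fun j => (Real.exp_pos _).le) fun j => ?_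
              have := (abs_le.1 (ih.2 j)).2
              linarith
            rw [hfs_eq i, abs_le]
            constructor <;> [linarith [hlo]; linarith [hup]]
          · rw [Function.update_of_ne hne]
            exact ih.1 i
        · intro j
          rw [hgk]
          exact ih.2 j
      · obtain ⟨hfk, hgk⟩ := hc2 hlt
        constructor
        · intro i
          rw [hfk]
          exact ih.1 i
        · intro j
          rw [hgk]
          rcases eq_or_ne j J with rfl | hne
          · rw [Function.update_self]
            set Tk := ∑ i, Real.exp (-C i j / γ) * Real.exp (f m i / γ) with hTk
            have hTkpos : 0 < Tk :=
              Finset.sum_pos (fun i _ => mul_pos (Real.exp_pos _) (Real.exp_pos _))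
                Finset.univ_nonempty
            have hup : γ * Real.log Tk ≤ (2 * E + t) + γ * Real.log (T j) := by
              refine gamma_log_le hγ hTkpos ?_
              refine sum_exp_le_aux hγ (fun i => Real.exp (-C i j / γ)) (f m) fs _
                (fun i => (Real.exp_pos _).le) fun i => ?_
              have := (abs_le.1 (ih.1 i)).1
              linarith
            have hlo : γ * Real.log (T j) ≤ (2 * E - t) + γ * Real.log Tk := by
              refine gamma_log_le hγ (hTpos j) ?_
              refine sum_exp_le_aux hγ (fun i => Real.exp (-C i j / γ)) fs (f m) _
                (fun i => (Real.exp_pos _).le) fun i => ?_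
              have := (abs_le.1 (ih.1 i)).2
              linarith
            rw [hgs_eq j, abs_le]
            constructor <;> [linarith [hlo]; linarith [hup]]
          · rw [Function.update_of_ne hne]
            exact ih.2 j
  obtain ⟨hQf, hQg⟩ := hQ k
  -- abbreviations for the current plan marginals
  set r : Fin n → ℝ := fun i => ∑ j, plan C γ (f k) (g k) i j with hrdef
  set cc : Fin n → ℝ := fun j => ∑ i, plan C γ (f k) (g k) i j with hccdef
  -- step 1: concavity bound
  have hplan_eq : ∀ (F G : Fin n → ℝ) (i j : Fin n),
      Real.exp ((F i + G j - C i j) / γ) = plan C γ F G i j := by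
    intro F G i j
    rw [plan, mul_assoc, ← Real.exp_add, ← Real.exp_add]
    congr 1
    ring
  have hterm : ∀ i j, plan C γ (f k) (g k) i j * ((fs i - f k i) + (gs j - g k j)) ≤
      γ * (Real.exp ((fs i + gs j - C i j) / γ) - Real.exp ((f k i + g k j - C i j) / γ)) := by
    intro i j
    set s := (f k i + g k j - C i j) / γ with hs
    set s' := (fs i + gs j - C i j) / γ with hs'
    have h1 : (s' - s) + 1 ≤ Real.exp (s' - s) := Real.add_one_le_exp _
    have h2 : Real.exp s * ((s' - s) + 1) ≤ Real.exp s * Real.exp (s' - s) :=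
      mul_le_mul_of_nonneg_left h1 (Real.exp_pos _).le
    rw [← Real.exp_add] at h2
    have hss : s + (s' - s) = s' := by ring
    rw [hss] at h2
    have h3 : Real.exp s * (s' - s) ≤ Real.exp s' - Real.exp s := by
      rw [mul_add, mul_one] at h2
      linarith
    have h4 : γ * (s' - s) = (fs i - f k i) + (gs j - g k j) := by
      rw [hs, hs']
      field_simp
      ring
    have h5 : plan C γ (f k) (g k) i j = Real.exp s := (hplan_eq _ _ i j).symm
    rw [h5, ← h4]
    nlinarith [h3, hγ]
  have hXY : (∑ i, (fs i - f k i) * r i) + (∑ j, (gs j - g k j) * cc j) ≤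
      γ * ((∑ i, ∑ j, Real.exp ((fs i + gs j - C i j) / γ)) -
        (∑ i, ∑ j, Real.exp ((f k i + g k j - C i j) / γ))) := by
    have hsum : ∑ i, ∑ j, plan C γ (f k) (g k) i j * ((fs i - f k i) + (gs j - g k j)) ≤
        ∑ i, ∑ j, γ * (Real.exp ((fs i + gs j - C i j) / γ) -
          Real.exp ((f k i + g k j - C i j) / γ)) :=
      Finset.sum_le_sum fun i _ => Finset.sum_le_sum fun j _ => hterm i j
    have hL : ∑ i, ∑ j, plan C γ (f k) (g k) i j * ((fs i - f k i) + (gs j - g k j)) =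
        (∑ i, (fs i - f k i) * r i) + (∑ j, (gs j - g k j) * cc j) := by
      have e1 : ∀ i, ∑ j, plan C γ (f k) (g k) i j * ((fs i - f k i) + (gs j - g k j)) =
          (fs i - f k i) * r i + ∑ j, plan C γ (f k) (g k) i j * (gs j - g k j) := by
        intro i
        simp only [hrdef]
        rw [Finset.mul_sum, ← Finset.sum_add_distrib]
        exact Finset.sum_congr rfl fun j _ => by ring
      rw [Finset.sum_congr rfl fun i _ => e1 i, Finset.sum_add_distrib]
      congr 1
      rw [Finset.sum_comm]
      exact Finset.sum_congr rfl fun j _ => by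
        simp only [hccdef]
        rw [Finset.mul_sum]
        exact Finset.sum_congr rfl fun i _ => by ring
    have hR : ∑ i, ∑ j, γ * (Real.exp ((fs i + gs j - C i j) / γ) -
        Real.exp ((f k i + g k j - C i j) / γ)) =
        γ * ((∑ i, ∑ j, Real.exp ((fs i + gs j - C i j) / γ)) -
          (∑ i, ∑ j, Real.exp ((f k i + g k j - C i j) / γ))) := by
      simp only [← Finset.sum_sub_distrib]
      simp only [Finset.mul_sum]
    rw [hL, hR] at hsum
    exact hsum
  have hdual : dualObj a b C γ fs gs - dualObj a b C γ (f k) (g k) =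
      (∑ i, (fs i - f k i) * a i) + (∑ j, (gs j - g k j) * b j) -
        γ * ((∑ i, ∑ j, Real.exp ((fs i + gs j - C i j) / γ)) -
          (∑ i, ∑ j, Real.exp ((f k i + g k j - C i j) / γ))) := by
    rw [dualObj, dualObj]
    have e1 : ∑ i, (fs i - f k i) * a i = (∑ i, fs i * a i) - ∑ i, f k i * a i := by
      rw [← Finset.sum_sub_distrib]
      exact Finset.sum_congr rfl fun i _ => by ring
    have e2 : ∑ j, (gs j - g k j) * b j = (∑ j, gs j * b j) - ∑ j, g k j * b j := by
      rw [← Finset.sum_sub_distrib]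
      exact Finset.sum_congr rfl fun j _ => by ring
    rw [e1, e2]
    ring
  have hsum_r : ∑ i, r i = ∑ j, cc j := by
    simp only [hrdef, hccdef]
    exact Finset.sum_comm
  have hbal : ∑ i, (a i - r i) = ∑ j, (b j - cc j) := by
    rw [Finset.sum_sub_distrib, Finset.sum_sub_distrib, ha1, hb1, hsum_r]
  have hmain : dualObj a b C γ fs gs - dualObj a b C γ (f k) (g k) ≤
      (∑ i, (fs i + t - f k i) * (a i - r i)) + (∑ j, (gs j - t - g k j) * (b j - cc j)) := by
    have hins : (∑ i, (fs i + t - f k i) * (a i - r i)) +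
        (∑ j, (gs j - t - g k j) * (b j - cc j)) =
        ((∑ i, (fs i - f k i) * (a i - r i)) + (∑ j, (gs j - g k j) * (b j - cc j))) +
          t * (∑ i, (a i - r i)) - t * (∑ j, (b j - cc j)) := by
      have e1 : ∑ i, (fs i + t - f k i) * (a i - r i) =
          (∑ i, (fs i - f k i) * (a i - r i)) + t * ∑ i, (a i - r i) := by
        rw [Finset.mul_sum, ← Finset.sum_add_distrib]
        exact Finset.sum_congr rfl fun i _ => by ring
      have e2 : ∑ j, (gs j - t - g k j) * (b j - cc j) =
          (∑ j, (gs j - g k j) * (b j - cc j)) - t * ∑ j, (b j - cc j) := by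
        rw [Finset.mul_sum, ← Finset.sum_sub_distrib]
        exact Finset.sum_congr rfl fun j _ => by ring
      rw [e1, e2]
      ring
    have esplit : ∀ i, (fs i - f k i) * (a i - r i) =
        (fs i - f k i) * a i - (fs i - f k i) * r i := fun i => by ring
    have esplit2 : ∀ j, (gs j - g k j) * (b j - cc j) =
        (gs j - g k j) * b j - (gs j - g k j) * cc j := fun j => by ring
    have e3 : ∑ i, (fs i - f k i) * (a i - r i) =
        (∑ i, (fs i - f k i) * a i) - ∑ i, (fs i - f k i) * r i := by
      rw [← Finset.sum_sub_distrib]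
      exact Finset.sum_congr rfl fun i _ => esplit i
    have e4 : ∑ j, (gs j - g k j) * (b j - cc j) =
        (∑ j, (gs j - g k j) * b j) - ∑ j, (gs j - g k j) * cc j := by
      rw [← Finset.sum_sub_distrib]
      exact Finset.sum_congr rfl fun j _ => esplit2 j
    rw [hins, hbal, hdual, e3, e4]
    linarith [hXY]
  -- step 2: Hölder-type bound
  have hfinal : (∑ i, (fs i + t - f k i) * (a i - r i)) +
      (∑ j, (gs j - t - g k j) * (b j - cc j)) ≤
      2 * E * ((∑ i, |a i - r i|) + (∑ j, |b j - cc j|)) := by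
    have h1 : ∑ i, (fs i + t - f k i) * (a i - r i) ≤ ∑ i, 2 * E * |a i - r i| := by
      refine Finset.sum_le_sum fun i _ => ?_
      calc (fs i + t - f k i) * (a i - r i) ≤ |(fs i + t - f k i) * (a i - r i)| :=
            le_abs_self _
        _ = |fs i + t - f k i| * |a i - r i| := abs_mul _ _
        _ ≤ 2 * E * |a i - r i| := mul_le_mul_of_nonneg_right (hQf i) (abs_nonneg _)
    have h2 : ∑ j, (gs j - t - g k j) * (b j - cc j) ≤ ∑ j, 2 * E * |b j - cc j| := by
      refine Finset.sum_le_sum fun j _ => ?_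
      calc (gs j - t - g k j) * (b j - cc j) ≤ |(gs j - t - g k j) * (b j - cc j)| :=
            le_abs_self _
        _ = |gs j - t - g k j| * |b j - cc j| := abs_mul _ _
        _ ≤ 2 * E * |b j - cc j| := mul_le_mul_of_nonneg_right (hQg j) (abs_nonneg _)
    calc (∑ i, (fs i + t - f k i) * (a i - r i)) +
        (∑ j, (gs j - t - g k j) * (b j - cc j)) ≤
        (∑ i, 2 * E * |a i - r i|) + (∑ j, 2 * E * |b j - cc j|) := add_le_add h1 h2
      _ = 2 * E * ((∑ i, |a i - r i|) + (∑ j, |b j - cc j|)) := by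
        rw [← Finset.mul_sum, ← Finset.mul_sum]
        ring
  exact hmain.trans hfinal
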